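/- Let n and r be coprime positive integers, and consider in ℤ[t] the polynomial P = (t^n + 1) * (1 + t^n + t^{2n} + ... + t^{(r-1)n}), i.e. P = (t^n + 1) * (∑_{i=0}^{r-1} t^{n*i}). Then the sum over all natural numbers m divisible by r of (coefficient of t^m in P) times t^m equals 1 + t^{n*r}. -/

import Mathlib

open Polynomial Finset

theorem lift_map_f1 (n r : ℕ) (hn : 0 < n) (hr : 0 < r) (hnr : Nat.Coprime n r)
    (P : ℤ[X])
    (hP : P = ((X : ℤ[X]) ^ n + 1) * ∑ i ∈ Finset.range r, (X : ℤ[X]) ^ (n * i)) :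
    (∑ m ∈ P.support, if r ∣ m then Polynomial.C (P.coeff m) * (X : ℤ[X]) ^ m else 0) =
      1 + (X : ℤ[X]) ^ (n * r) := by
  classical
  set f : ℕ → ℤ → ℤ[X] := fun m a => if r ∣ m then C a * X ^ m else 0 with hf
  have hf0 : ∀ m, f m 0 = 0 := by intro m; simp [hf]
  have hfadd : ∀ m (a b : ℤ), f m (a + b) = f m a + f m b := by
    intro m a b
    simp only [hf]
    split <;> simp [add_mul]
  have hP' : P = ∑ i ∈ range r,
      ((monomial (n * i) (1 : ℤ)) + monomial (n * (i + 1)) 1) := by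
    rw [hP, Finset.mul_sum]
    refine Finset.sum_congr rfl fun i _ => ?_
    rw [add_mul, one_mul, ← pow_add]
    simp [monomial_one_right_eq_X_pow, mul_add, mul_comm]
    ring
  have key : ∀ s : Finset ℕ,
      (∑ i ∈ s, ((monomial (n * i) (1 : ℤ)) + monomial (n * (i + 1)) 1)).sum f
        = ∑ i ∈ s, (f (n * i) 1 + f (n * (i + 1)) 1) := by
    intro s
    induction s using Finset.induction_on with
    | empty => simp [Polynomial.sum_zero_index]
    | insert _ _ hx ih =>
      rw [Finset.sum_insert hx, Polynomial.sum_add_index _ _ f hf0 hfadd,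
        Polynomial.sum_add_index _ _ f hf0 hfadd, Polynomial.sum_monomial_index _ f (hf0 _),
        Polynomial.sum_monomial_index _ f (hf0 _), ih, Finset.sum_insert hx]
  have hLHS : (∑ m ∈ P.support, if r ∣ m then C (P.coeff m) * (X : ℤ[X]) ^ m else 0)
      = P.sum f := rfl
  rw [hLHS, hP', key, Finset.sum_add_distrib]
  have hdvd : ∀ i, r ∣ n * i ↔ r ∣ i := by
    intro i
    constructor
    · intro h
      exact (Nat.Coprime.dvd_of_dvd_mul_left (Nat.Coprime.symm hnr) h)
    · intro h
      exact Dvd.dvd.mul_left h n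
  have h1 : (∑ i ∈ range r, f (n * i) 1) = 1 := by
    rw [Finset.sum_eq_single_of_mem 0 (Finset.mem_range.2 hr)]
    · simp [hf]
    · intro i hi hi0
      have : ¬ r ∣ n * i := by
        rw [hdvd]
        intro h
        exact hi0 (Nat.eq_zero_of_dvd_of_lt h (Finset.mem_range.1 hi))
      simp [hf, this]
  have h2 : (∑ i ∈ range r, f (n * (i + 1)) 1) = X ^ (n * r) := by
    rw [Finset.sum_eq_single_of_mem (r - 1) (Finset.mem_range.2 (Nat.sub_lt hr one_pos))]
    · have : r - 1 + 1 = r := Nat.succ_pred_eq_of_pos hr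
      simp [hf, this]
    · intro i hi hi0
      have hlt : i + 1 < r + 1 := by
        have := Finset.mem_range.1 hi; omega
      have hne : i + 1 ≠ r := by omega
      have : ¬ r ∣ n * (i + 1) := by
        rw [hdvd]
        intro h
        have := Nat.le_of_dvd (Nat.succ_pos i) h
        omega
      simp [hf, this]
  rw [h1, h2]
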